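/- arXiv:2306.07829 — 3 statements merged into one kernel-verified Lean document; each statement's English description precedes it below -/
import Mathlib

section
/- For any permutation σ in the symmetric group S_{n+k-1} (with n, k ≥ 1) and any index i with 1 ≤ i ≤ n, there exists at most one pair (τ, ν) with τ ∈ S_n and ν ∈ S_k such that τ ∘_i ν = σ, where ∘_i denotes the operadic partial composition of permutations. -/
/-- The value (as a natural number) at `x` of the operadic partial composition `τ ∘ᵢ ν`
of permutations: the block `{i, …, i+k-1}` is permuted by `ν` (shifted by `i`) and the
resulting blocks (one of size `k` and `n-1` singletons) are permuted according to `τ`. -/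
def partialCompFun (n k : ℕ) (hk : 0 < k) (i : Fin n)
    (τ : Equiv.Perm (Fin n)) (ν : Equiv.Perm (Fin k))
    (x : Fin (n + k - 1)) : ℕ :=
  if h : i.val ≤ x.val ∧ x.val < i.val + k then
    (τ i).val + (ν ⟨x.val - i.val, by omega⟩).val
  else
    let m : Fin n :=
      if h2 : x.val < i.val then ⟨x.val, by have := i.isLt; omega⟩
      else ⟨x.val - (k - 1), by have := x.isLt; have := i.isLt; omega⟩
    if (τ i).val < (τ m).val then (τ m).val + (k - 1) else (τ m).val

/-- `σ` is the operadic partial composition `τ ∘ᵢ ν`. -/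
def IsPartialComp (n k : ℕ) (hk : 0 < k) (i : Fin n)
    (τ : Equiv.Perm (Fin n)) (ν : Equiv.Perm (Fin k))
    (σ : Equiv.Perm (Fin (n + k - 1))) : Prop :=
  ∀ x, (σ x).val = partialCompFun n k hk i τ ν x

lemma partialCompFun_in (n k : ℕ) (hk : 0 < k) (i : Fin n)
    (τ : Equiv.Perm (Fin n)) (ν : Equiv.Perm (Fin k))
    (j : Fin k) (hx : i.val + j.val < n + k - 1) :
    partialCompFun n k hk i τ ν ⟨i.val + j.val, hx⟩ = (τ i).val + (ν j).val := by
  have hcond : i.val ≤ i.val + j.val ∧ i.val + j.val < i.val + k :=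
    ⟨Nat.le_add_right _ _, by have := j.isLt; omega⟩
  rw [partialCompFun, dif_pos hcond]
  congr 1
  congr 1
  exact Fin.ext (by simp)

lemma partialCompFun_out (n k : ℕ) (hk : 0 < k) (i : Fin n)
    (τ : Equiv.Perm (Fin n)) (ν : Equiv.Perm (Fin k))
    (x : Fin (n + k - 1)) (m : Fin n)
    (hcase : (x.val < i.val ∧ m.val = x.val) ∨ (i.val + k ≤ x.val ∧ m.val + (k-1) = x.val)) :
    partialCompFun n k hk i τ ν x =
      if (τ i).val < (τ m).val then (τ m).val + (k - 1) else (τ m).val := by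
  have hcond : ¬ (i.val ≤ x.val ∧ x.val < i.val + k) := by omega
  rw [partialCompFun, dif_neg hcond]
  dsimp only
  rcases hcase with ⟨h, hm⟩ | ⟨h, hm⟩
  · rw [dif_pos h]
    rw [show (⟨x.val, by have := i.isLt; omega⟩ : Fin n) = m from
      Fin.ext (show x.val = m.val from hm.symm)]
  · rw [dif_neg (by omega : ¬ x.val < i.val)]
    rw [show (⟨x.val - (k-1), by have := x.isLt; have := i.isLt; omega⟩ : Fin n) = m from
      Fin.ext (show x.val - (k-1) = m.val by omega)]

/-- For any permutation `σ ∈ S_{n+k-1}` and any `i`, there is at most one pair `(τ, ν)`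
with `τ ∈ S_n`, `ν ∈ S_k` such that `τ ∘ᵢ ν = σ`. -/
theorem partialComp_unique (n k : ℕ) (hn : 0 < n) (hk : 0 < k) (i : Fin n)
    (σ : Equiv.Perm (Fin (n + k - 1)))
    (τ τ' : Equiv.Perm (Fin n)) (ν ν' : Equiv.Perm (Fin k))
    (h1 : IsPartialComp n k hk i τ ν σ) (h2 : IsPartialComp n k hk i τ' ν' σ) :
    τ = τ' ∧ ν = ν' := by
  -- Step 1: τ i = τ' i
  have key : ∀ (θ θ' : Equiv.Perm (Fin n)) (ρ ρ' : Equiv.Perm (Fin k)),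
      IsPartialComp n k hk i θ ρ σ → IsPartialComp n k hk i θ' ρ' σ →
      (θ' i).val ≤ (θ i).val := by
    intro θ θ' ρ ρ' H H'
    obtain ⟨j, hj⟩ : ∃ j : Fin k, ρ j = ⟨0, hk⟩ := ⟨ρ⁻¹ _, Equiv.apply_symm_apply ρ _⟩
    have hx : i.val + j.val < n + k - 1 := by have := i.isLt; have := j.isLt; omega
    have hH := H ⟨i.val + j.val, hx⟩
    have hH' := H' ⟨i.val + j.val, hx⟩
    rw [partialCompFun_in] at hH hH'
    rw [hj] at hH
    have hz : ((⟨0, hk⟩ : Fin k)).val = 0 := rfl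
    omega
  have hci : (τ i).val = (τ' i).val :=
    le_antisymm (key τ' τ ν' ν h2 h1) (key τ τ' ν ν' h1 h2)
  constructor
  · -- τ = τ'
    apply Equiv.ext
    intro m
    by_cases hm : m = i
    · subst hm; exact Fin.ext hci
    · have hne : (τ m).val ≠ (τ i).val := fun h => hm (τ.injective (Fin.ext h))
      have hne' : (τ' m).val ≠ (τ' i).val := fun h => hm (τ'.injective (Fin.ext h))
      by_cases hmi : m.val < i.val
      · have hx : m.val < n + k - 1 := by have := i.isLt; omega
        have hH := h1 ⟨m.val, hx⟩
        have hH' := h2 ⟨m.val, hx⟩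
        rw [partialCompFun_out n k hk i τ ν _ m (Or.inl ⟨hmi, rfl⟩)] at hH
        rw [partialCompFun_out n k hk i τ' ν' _ m (Or.inl ⟨hmi, rfl⟩)] at hH'
        apply Fin.ext
        split_ifs at hH hH' <;> omega
      · have hmi' : i.val < m.val := by
          rcases Nat.lt_or_ge i.val m.val with h | h
          · exact h
          · exact absurd (Fin.ext (by omega) : m = i) hm
        have hx : m.val + (k-1) < n + k - 1 := by have := m.isLt; omega
        have hH := h1 ⟨m.val + (k-1), hx⟩
        have hH' := h2 ⟨m.val + (k-1), hx⟩
        rw [partialCompFun_out n k hk i τ ν _ m (Or.inr ⟨show i.val + k ≤ m.val + (k-1) by omega, rfl⟩)] at hH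
        rw [partialCompFun_out n k hk i τ' ν' _ m (Or.inr ⟨show i.val + k ≤ m.val + (k-1) by omega, rfl⟩)] at hH'
        apply Fin.ext
        split_ifs at hH hH' <;> omega
  · -- ν = ν'
    apply Equiv.ext
    intro j
    have hx : i.val + j.val < n + k - 1 := by have := i.isLt; have := j.isLt; omega
    have hH := h1 ⟨i.val + j.val, hx⟩
    have hH' := h2 ⟨i.val + j.val, hx⟩
    rw [partialCompFun_in] at hH hH'
    exact Fin.ext (by omega)
end

section
/- A permutation σ ∈ S_{n+k-1} admits a decomposition σ = τ ∘_i ν with τ ∈ S_n and ν ∈ S_k if and only if the image σ({i, i+1, ..., i+k-1}) of the block is a set of k consecutive integers and σ restricted to the complement {1,...,n+k-1} \ {i,...,i+k-1} is order-isomorphic to a permutation of n-1 elements consistent with removing that block; equivalently, σ maps the interval {i,...,i+k-1} onto an interval of length k. -/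
/-- A permutation `σ ∈ S_{n+k-1}` admits a decomposition `σ = τ ∘ᵢ ν` with `τ ∈ S_n`,
`ν ∈ S_k` (i.e. is `(n,k,i)`-admissible) if and only if `σ` maps the interval
`{i, …, i+k-1}` onto an interval of length `k`. -/
theorem partialComp_admissible_iff (n k : ℕ) (hn : 0 < n) (hk : 0 < k) (i : Fin n)
    (σ : Equiv.Perm (Fin (n + k - 1))) :
    (∃ (τ : Equiv.Perm (Fin n)) (ν : Equiv.Perm (Fin k)), IsPartialComp n k hk i τ ν σ) ↔
    (∃ j : ℕ, j + k ≤ n + k - 1 ∧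
      ∀ x : Fin (n + k - 1),
        (i.val ≤ x.val ∧ x.val < i.val + k) ↔ (j ≤ (σ x).val ∧ (σ x).val < j + k)) := by
  constructor
  · rintro ⟨τ, ν, hσ⟩
    refine ⟨(τ i).val, by have := (τ i).isLt; omega, fun x => ?_⟩
    rw [hσ x]
    unfold partialCompFun
    by_cases h : i.val ≤ x.val ∧ x.val < i.val + k
    · rw [dif_pos h]
      have hv := (ν ⟨x.val - i.val, by omega⟩).isLt
      exact ⟨fun _ => by omega, fun _ => h⟩
    · rw [dif_neg h]
      have hx := x.isLt
      have hi := i.isLt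
      dsimp only
      set m : Fin n := if h2 : x.val < i.val then ⟨x.val, by omega⟩
        else ⟨x.val - (k - 1), by omega⟩ with hm
      have hmv : m.val ≠ i.val := by
        by_cases h2 : x.val < i.val
        · rw [hm, dif_pos h2]; dsimp; omega
        · rw [hm, dif_neg h2]; dsimp; omega
      have hτne : (τ m).val ≠ (τ i).val := fun hc =>
        hmv (congrArg Fin.val (τ.injective (Fin.ext hc)))
      split
      · next hlt => exact iff_of_false h (by omega)
      · next hlt => exact iff_of_false h (by omega)
  · rintro ⟨j, hj, hiff⟩
    have hi := i.isLt
    have hjn : j < n := by omega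
    -- the embedding of the block
    have hblk : ∀ y : Fin k, (i.val + y.val) < n + k - 1 := fun y => by
      have := y.isLt; omega
    have hν0 : ∀ y : Fin k, j ≤ (σ ⟨i.val + y.val, hblk y⟩).val ∧
        (σ ⟨i.val + y.val, hblk y⟩).val < j + k := fun y =>
      (hiff _).mp ⟨by show i.val ≤ i.val + y.val; omega,
        by show i.val + y.val < i.val + k; have := y.isLt; omega⟩
    let g : Fin k → Fin k := fun y => ⟨(σ ⟨i.val + y.val, hblk y⟩).val - j, by
      have := hν0 y; omega⟩
    have hginj : Function.Injective g := by
      intro a b hab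
      have h1 := hν0 a
      have h2 := hν0 b
      have hval : (σ ⟨i.val + a.val, hblk a⟩).val = (σ ⟨i.val + b.val, hblk b⟩).val := by
        have := congrArg Fin.val hab
        simp only [g] at this
        omega
      have := congrArg Fin.val (σ.injective (Fin.ext hval))
      simp only at this
      exact Fin.ext (by omega)
    let ν : Equiv.Perm (Fin k) := Equiv.ofBijective g (Finite.injective_iff_bijective.mp hginj)
    -- the embedding of the complement
    let e : Fin n → Fin (n + k - 1) := fun m =>
      if m.val < i.val then ⟨m.val, by omega⟩
      else ⟨m.val + (k - 1), by have := m.isLt; omega⟩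
    have heval : ∀ m : Fin n, (e m).val = if m.val < i.val then m.val else m.val + (k - 1) := by
      intro m
      simp only [e]
      split
      · rfl
      · rfl
    have he_out : ∀ m : Fin n, m ≠ i →
        (σ (e m)).val < j ∨ j + k ≤ (σ (e m)).val := by
      intro m hm
      have hmv : m.val ≠ i.val := fun hc => hm (Fin.ext hc)
      have hnot : ¬ (i.val ≤ (e m).val ∧ (e m).val < i.val + k) := by
        rw [heval]
        split <;> omega
      have := (not_iff_not.mpr (hiff (e m))).mp hnot
      omega
    let f : Fin n → Fin n := fun m =>
      if m = i then ⟨j, hjn⟩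
      else if h : (σ (e m)).val < j then ⟨(σ (e m)).val, by omega⟩
        else ⟨(σ (e m)).val - (k - 1), by have := (σ (e m)).isLt; omega⟩
    have heinj : Function.Injective e := by
      intro a b hab
      have hab : (e a).val = (e b).val := congrArg Fin.val hab
      rw [heval, heval] at hab
      split at hab <;> split at hab <;> exact Fin.ext (by omega)
    have hfinj : Function.Injective f := by
      intro a b hab
      have hab := congrArg Fin.val hab
      simp only [f] at hab
      by_cases ha : a = i <;> by_cases hb : b = i
      · exact ha.trans hb.symm
      · exfalso
        rw [if_pos ha, if_neg hb] at hab
        have := he_out b hb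
        split at hab <;> dsimp at hab <;> omega
      · exfalso
        rw [if_neg ha, if_pos hb] at hab
        have := he_out a ha
        split at hab <;> dsimp at hab <;> omega
      · rw [if_neg ha, if_neg hb] at hab
        have h1 := he_out a ha
        have h2 := he_out b hb
        have hval : (σ (e a)).val = (σ (e b)).val := by
          split at hab <;> split at hab <;> dsimp at hab <;> omega
        exact heinj (σ.injective (Fin.ext hval))
    let τ : Equiv.Perm (Fin n) := Equiv.ofBijective f (Finite.injective_iff_bijective.mp hfinj)
    refine ⟨τ, ν, fun x => ?_⟩
    have hτi : (τ i).val = j := by simp [τ, f]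
    unfold partialCompFun
    by_cases h : i.val ≤ x.val ∧ x.val < i.val + k
    · rw [dif_pos h]
      have hx := x.isLt
      have hxeq : (⟨i.val + (⟨x.val - i.val, by omega⟩ : Fin k).val,
          hblk ⟨x.val - i.val, by omega⟩⟩ : Fin (n + k - 1)) = x := Fin.ext (by dsimp; omega)
      have hνval : (ν ⟨x.val - i.val, by omega⟩).val = (σ x).val - j := by
        show (g ⟨x.val - i.val, by omega⟩).val = (σ x).val - j
        simp only [g]
        rw [hxeq]
      have hσx := (hiff x).mp h
      rw [hτi, hνval]
      omega
    · rw [dif_neg h]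
      have hx := x.isLt
      dsimp only
      set m : Fin n := if h2 : x.val < i.val then ⟨x.val, by omega⟩
        else ⟨x.val - (k - 1), by omega⟩ with hm
      have hmval : m.val = if x.val < i.val then x.val else x.val - (k - 1) := by
        rw [hm]
        split
        · rfl
        · rfl

      have hm2 : (x.val < i.val ∧ m.val = x.val) ∨
          (i.val + k ≤ x.val ∧ m.val = x.val - (k - 1)) := by
        by_cases h2 : x.val < i.val
        · exact Or.inl ⟨h2, by rw [hmval, if_pos h2]⟩
        · exact Or.inr ⟨by omega, by rw [hmval, if_neg h2]⟩
      have hmne : m ≠ i := by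
        intro hc
        have := congrArg Fin.val hc
        omega
      have hem : e m = x := by
        refine Fin.ext ?_
        rw [heval]
        rcases hm2 with ⟨h2, h3⟩ | ⟨h2, h3⟩
        · rw [if_pos (by omega), h3]
        · rw [if_neg (by omega), h3]
          omega
      have hτm : (τ m).val = if (σ x).val < j then (σ x).val else (σ x).val - (k - 1) := by
        show (f m).val = _
        simp only [f, if_neg hmne, hem]
        split <;> rfl
      have hout : (σ x).val < j ∨ j + k ≤ (σ x).val := by
        have := he_out m hmne
        rwa [hem] at this
      rcases hout with h1 | h1
      · rw [if_pos h1] at hτm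
        split
        · next hlt => omega
        · next hlt => omega
      · rw [if_neg (by omega)] at hτm
        split
        · next hlt => omega
        · next hlt => omega
end

section
/- For any σ ∈ S_{n+k-1} that is (n,k,i)-admissible with decomposition σ = σ^{(1)} ∘_i σ^{(2)} (σ^{(1)} ∈ S_n, σ^{(2)} ∈ S_k), the sign of σ satisfies sgn(σ) = sgn(σ^{(2)}) · sgn(β(σ^{(1)})), where β(σ^{(1)}) ∈ S_{n+k-1} is the block permutation obtained from σ^{(1)} by replacing the i-th strand by a block of k parallel strands (i.e., σ^{(1)} ∘_i id_k). -/
/-- For any `(n,k,i)`-admissible `σ ∈ S_{n+k-1}` with decomposition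
`σ = σ⁽¹⁾ ∘ᵢ σ⁽²⁾` (`σ⁽¹⁾ ∈ S_n`, `σ⁽²⁾ ∈ S_k`), the sign of `σ` satisfies
`sgn(σ) = sgn(σ⁽²⁾) · sgn(β(σ⁽¹⁾))`, where `β(σ⁽¹⁾) = σ⁽¹⁾ ∘ᵢ id_k ∈ S_{n+k-1}` is the
block permutation obtained by replacing the `i`-th strand of `σ⁽¹⁾` by `k` parallel
strands. -/
theorem sign_partialComp (n k : ℕ) (hn : 0 < n) (hk : 0 < k) (i : Fin n)
    (σ β : Equiv.Perm (Fin (n + k - 1)))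
    (σ₁ : Equiv.Perm (Fin n)) (σ₂ : Equiv.Perm (Fin k))
    (hσ : IsPartialComp n k hk i σ₁ σ₂ σ)
    (hβ : IsPartialComp n k hk i σ₁ (1 : Equiv.Perm (Fin k)) β) :
    Equiv.Perm.sign σ = Equiv.Perm.sign σ₂ * Equiv.Perm.sign β := by
  classical
  let p : Fin (n + k - 1) → Prop := fun x => i.val ≤ x.val ∧ x.val < i.val + k
  have hik : ∀ (y : Fin k), i.val + y.val < n + k - 1 := by
    intro y; have := i.isLt; have := y.isLt; omega
  let f : Fin k ≃ Subtype p :=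
    { toFun := fun y => ⟨⟨i.val + y.val, hik y⟩, by constructor <;> simp <;> omega⟩
      invFun := fun x => ⟨x.val.val - i.val, by have := x.2.1; have := x.2.2; omega⟩
      left_inv := by intro y; ext; simp
      right_inv := by intro x; have := x.2.1; ext; simp; omega }
  let γ := σ₂.extendDomain f
  have hcomp : σ = β * γ := by
    ext x
    by_cases h : p x
    · have hγv : (γ x).val = i.val + (σ₂ ⟨x.val - i.val, by omega⟩).val := by
        show (σ₂.extendDomain f x).val = _
        rw [Equiv.Perm.extendDomain_apply_subtype _ f h]
        rfl
      show (σ x).val = (β (γ x)).val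
      rw [hσ x, hβ (γ x), partialCompFun, partialCompFun]
      have hpγ : i.val ≤ (γ x).val ∧ (γ x).val < i.val + k := by
        rw [hγv]; constructor <;> simp <;> omega
      rw [dif_pos h, dif_pos hpγ]
      simp only [Equiv.Perm.one_apply]
      congr 1
      rw [hγv]
      omega
    · have hγ : γ x = x := Equiv.Perm.extendDomain_apply_not_subtype _ f h
      show (σ x).val = (β (γ x)).val
      rw [hγ, hσ x, hβ x, partialCompFun, partialCompFun, dif_neg h, dif_neg h]
  have hsγ : Equiv.Perm.sign γ = Equiv.Perm.sign σ₂ := Equiv.Perm.sign_extendDomain σ₂ f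
  rw [hcomp, map_mul, hsγ, mul_comm]
end
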